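/- arXiv:2301.06954 — 5 statements merged into one kernel-verified Lean document; each statement's English description precedes it below -/
import Mathlib

section
/- There is no rational solution (x, y, z) to the equation 2x² + 3y² + 3z² = 1. -/
private lemma key1 : ∀ a b : ZMod 3, 2 * a ^ 2 = b ^ 2 → a = 0 ∧ b = 0 := by decide

private lemma key2 : ∀ a b : ZMod 3, a ^ 2 + b ^ 2 = 0 → a = 0 ∧ b = 0 := by decide

private lemma descent : ∀ n : ℕ, ∀ p q r s : ℤ,
    p.natAbs + q.natAbs + r.natAbs + s.natAbs = n →
    2 * p ^ 2 + 3 * q ^ 2 + 3 * r ^ 2 = s ^ 2 →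
    p = 0 ∧ q = 0 ∧ r = 0 ∧ s = 0 := by
  intro n
  induction n using Nat.strong_induction_on with
  | _ n ih =>
  intro p q r s hn h
  have h30 : (3 : ZMod 3) = 0 := by decide
  have hc : 2 * (p : ZMod 3) ^ 2 = (s : ZMod 3) ^ 2 := by
    have hc0 := congrArg (fun t : ℤ => (t : ZMod 3)) h
    push_cast at hc0
    linear_combination hc0 - (q : ZMod 3) ^ 2 * h30 - (r : ZMod 3) ^ 2 * h30
  obtain ⟨hp3, hs3⟩ := key1 _ _ hc
  obtain ⟨p₁, hp⟩ := (ZMod.intCast_zmod_eq_zero_iff_dvd p 3).mp hp3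
  obtain ⟨s₁, hs⟩ := (ZMod.intCast_zmod_eq_zero_iff_dvd s 3).mp hs3
  subst hp hs
  have h' : (3:ℤ) * (q ^ 2 + r ^ 2) = 3 * (3 * s₁ ^ 2 - 6 * p₁ ^ 2) := by linear_combination h
  have h'' : q ^ 2 + r ^ 2 = 3 * s₁ ^ 2 - 6 * p₁ ^ 2 := by
    have := mul_left_cancel₀ (by norm_num : (3:ℤ) ≠ 0) h'
    linarith
  have hqr : (q : ZMod 3) ^ 2 + (r : ZMod 3) ^ 2 = 0 := by
    have hc0 := congrArg (fun t : ℤ => (t : ZMod 3)) h''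
    push_cast at hc0
    linear_combination hc0 + ((s₁ : ZMod 3) ^ 2 - 2 * (p₁ : ZMod 3) ^ 2) * h30
  obtain ⟨hq3, hr3⟩ := key2 _ _ hqr
  obtain ⟨q₁, hq⟩ := (ZMod.intCast_zmod_eq_zero_iff_dvd q 3).mp hq3
  obtain ⟨r₁, hr⟩ := (ZMod.intCast_zmod_eq_zero_iff_dvd r 3).mp hr3
  subst hq hr
  have hnew : 2 * p₁ ^ 2 + 3 * q₁ ^ 2 + 3 * r₁ ^ 2 = s₁ ^ 2 := by
    have h9 : (9:ℤ) * (2 * p₁ ^ 2 + 3 * q₁ ^ 2 + 3 * r₁ ^ 2) = 9 * s₁ ^ 2 := by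
      linear_combination h
    have := mul_left_cancel₀ (by norm_num : (9:ℤ) ≠ 0) h9
    linarith
  set m := p₁.natAbs + q₁.natAbs + r₁.natAbs + s₁.natAbs with hm
  have hn3 : n = 3 * m := by
    simp only [hm, Int.natAbs_mul, Int.natAbs_natCast] at hn
    omega
  have hz : p₁ = 0 ∧ q₁ = 0 ∧ r₁ = 0 ∧ s₁ = 0 := by
    rcases Nat.eq_zero_or_pos m with h0 | hpos
    · refine ⟨?_, ?_, ?_, ?_⟩ <;> rw [← Int.natAbs_eq_zero] <;> omega
    · exact ih m (by omega) p₁ q₁ r₁ s₁ rfl hnew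
  obtain ⟨e1, e2, e3, e4⟩ := hz
  subst e1 e2 e3 e4
  norm_num

/-- There is no rational solution `(x, y, z)` to `2x² + 3y² + 3z² = 1`. -/
theorem stmt_0 : ¬ ∃ x y z : ℚ, 2 * x ^ 2 + 3 * y ^ 2 + 3 * z ^ 2 = 1 := by
  rintro ⟨x, y, z, h⟩
  have key : 2 * (x.num * (y.den:ℤ) * (z.den:ℤ)) ^ 2
      + 3 * (y.num * (x.den:ℤ) * (z.den:ℤ)) ^ 2
      + 3 * (z.num * (x.den:ℤ) * (y.den:ℤ)) ^ 2
      = ((x.den:ℤ) * (y.den:ℤ) * (z.den:ℤ)) ^ 2 := by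
    have hx : ((x.den:ℚ)) ≠ 0 := by positivity
    have hy : ((y.den:ℚ)) ≠ 0 := by positivity
    have hz : ((z.den:ℚ)) ≠ 0 := by positivity
    have hq : (2:ℚ) * ((x.num:ℚ) * (y.den:ℚ) * (z.den:ℚ)) ^ 2
        + 3 * ((y.num:ℚ) * (x.den:ℚ) * (z.den:ℚ)) ^ 2
        + 3 * ((z.num:ℚ) * (x.den:ℚ) * (y.den:ℚ)) ^ 2
        = ((x.den:ℚ) * (y.den:ℚ) * (z.den:ℚ)) ^ 2 := by
      rw [← Rat.num_div_den x, ← Rat.num_div_den y, ← Rat.num_div_den z] at h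
      field_simp at h
      linear_combination h
    exact_mod_cast hq
  have := (descent _ _ _ _ _ rfl key).2.2.2
  have hx := x.pos
  have : ((x.den:ℤ) * (y.den:ℤ) * (z.den:ℤ)) > 0 := by positivity
  omega
end

section
/- A positive definite rational quadratic form q on ℚⁿ admits a clique of size n+1 in G(ℚⁿ, q) if and only if q is rationally equivalent to Sₙ(x) = Σ_{1≤i≤j≤n} xᵢxⱼ. -/
/-- The unit-distance graph of a rational quadratic form `q` on `ℚⁿ`:
vertices are `ℚⁿ` and `x ~ y` iff `q (x - y) = 1`. -/
def distGraph {n : ℕ} (q : QuadraticForm ℚ (Fin n → ℚ)) : SimpleGraph (Fin n → ℚ) where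
  Adj x y := q (x - y) = 1
  symm := ⟨fun x y h => by change q (x - y) = 1 at h; change q (y - x) = 1; rwa [QuadraticMap.map_sub] at h⟩
  loopless := ⟨fun x h => by change q (x - x) = 1 at h; simp [sub_self] at h⟩

/-- The quadratic form `Sₙ(x) = ∑_{1 ≤ i ≤ j ≤ n} xᵢ xⱼ` as a function. -/
def Sfun (n : ℕ) (x : Fin n → ℚ) : ℚ := ∑ i, ∑ j ∈ Finset.Ici i, x i * x j

lemma two_mul_Sfun (n : ℕ) (x : Fin n → ℚ) :
    2 * Sfun n x = (∑ i, x i)^2 + ∑ i, (x i)^2 := by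
  have hswap : ∑ i, ∑ j ∈ Finset.Iio i, x i * x j = ∑ i, ∑ j ∈ Finset.Ioi i, x i * x j := by
    rw [Finset.sum_comm' (s' := fun j => Finset.Ioi j) (t' := Finset.univ)
      (by intro i j; simp [Finset.mem_Iio, Finset.mem_Ioi])]
    exact Finset.sum_congr rfl fun j _ => Finset.sum_congr rfl fun i _ => mul_comm _ _
  have hsplit : ∀ i : Fin n, ∑ j, x i * x j
      = (∑ j ∈ Finset.Iio i, x i * x j) + ∑ j ∈ Finset.Ici i, x i * x j := by
    intro i
    rw [← Finset.sum_union (by simp [Finset.disjoint_left] :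
      Disjoint (Finset.Iio i) (Finset.Ici i))]
    congr 1
    ext j; simp [lt_or_ge]
  have hIci : ∀ i : Fin n, ∑ j ∈ Finset.Ici i, x i * x j
      = x i * x i + ∑ j ∈ Finset.Ioi i, x i * x j := by
    intro i
    rw [← Finset.Ioi_insert, Finset.sum_insert (by simp)]
  have hsq : (∑ i, x i)^2 = ∑ i, ∑ j, x i * x j := by
    rw [sq, Finset.sum_mul_sum]
  rw [hsq, Sfun]
  simp only [hsplit, hIci, hswap, Finset.sum_add_distrib, sq]
  ring

lemma sum_gram (n : ℕ) (c : Fin n → Fin n → ℚ) (h : ∀ i j, c i j = if i = j then 2 else 1)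
    (x : Fin n → ℚ) : ∑ i, ∑ j, x i * x j * c i j = 2 * Sfun n x := by
  have key : ∀ i j, x i * x j * c i j = x i * x j + (if i = j then x i * x j else 0) := by
    intro i j; rw [h]; split <;> ring
  simp only [key, Finset.sum_add_distrib, Finset.sum_ite_eq, Finset.mem_univ, if_true]
  rw [two_mul_Sfun, sq, Finset.sum_mul_sum]
  ring_nf

lemma Sfun_zero (n : ℕ) (x : Fin n → ℚ) (h : Sfun n x = 0) : x = 0 := by
  have h2 := two_mul_Sfun n x
  rw [h, mul_zero] at h2
  have hs : ∑ i, (x i)^2 = 0 := by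
    nlinarith [sq_nonneg (∑ i, x i),
      Finset.sum_nonneg (fun j (_ : j ∈ Finset.univ) => sq_nonneg (x j))]
  funext i
  have hi := (Finset.sum_eq_zero_iff_of_nonneg (fun j _ => sq_nonneg (x j))).mp hs i
    (Finset.mem_univ i)
  simpa [pow_eq_zero_iff] using hi

lemma polar_one {M : Type*} [AddCommGroup M] [Module ℚ M] (q : QuadraticForm ℚ M) (x y : M)
    (hx : q x = 1) (hy : q y = 1) (hxy : q (x - y) = 1) : QuadraticMap.polar q x y = 1 := by
  have h1 : QuadraticMap.polar q x (-y) = q (x + -y) - q x - q (-y) := rfl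
  rw [QuadraticMap.polar_neg_right, QuadraticMap.map_neg, ← sub_eq_add_neg, hx, hy, hxy] at h1
  linarith

lemma single_mul_single_sum (n : ℕ) (i j : Fin n) :
    ∑ k, (Pi.single i 1 : Fin n → ℚ) k * (Pi.single j 1 : Fin n → ℚ) k
      = if i = j then 1 else 0 := by
  simp [Pi.single_apply, ite_and, eq_comm]

lemma Sfun_one (n : ℕ) (v : Fin n → ℚ) (h : (∑ i, v i)^2 + ∑ i, (v i)^2 = 2) :
    Sfun n v = 1 := by
  have := two_mul_Sfun n v
  linarith

/-- A positive definite rational quadratic form `q` on `ℚⁿ` admits a clique of size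
`n + 1` in `G(ℚⁿ, q)` iff `q` is rationally equivalent to `Sₙ`. -/
theorem stmt_8 {n : ℕ} (q : QuadraticForm ℚ (Fin n → ℚ)) (hq : q.PosDef) :
    (∃ s : Finset (Fin n → ℚ), (distGraph q).IsNClique (n + 1) s) ↔
      ∃ T : (Fin n → ℚ) ≃ₗ[ℚ] (Fin n → ℚ), ∀ x, q x = Sfun n (T x) := by
  constructor
  · rintro ⟨s, hclique, hcard⟩
    -- enumerate the clique
    set e := (Finset.equivFinOfCardEq hcard).symm with he
    set v : Fin (n + 1) → (Fin n → ℚ) := fun i => (e i : Fin n → ℚ) with hv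
    have vinj : Function.Injective v := fun a b h => e.injective (Subtype.ext h)
    have hadj : ∀ a b : Fin (n + 1), a ≠ b → q (v a - v b) = 1 := by
      intro a b hab
      exact hclique (e a).2 (e b).2 (fun h => hab (vinj h))
    set w : Fin n → (Fin n → ℚ) := fun i => v i.succ - v 0 with hw
    have hw1 : ∀ i, q (w i) = 1 := fun i => hadj i.succ 0 (Fin.succ_ne_zero i)
    have hw2 : ∀ i j, i ≠ j → q (w i - w j) = 1 := by
      intro i j hij
      have : w i - w j = v i.succ - v j.succ := by simp [hw, sub_sub_sub_cancel_right]
      rw [this]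
      exact hadj i.succ j.succ (fun h => hij (Fin.succ_injective n h))
    have hgram : ∀ i j, QuadraticMap.polar q (w i) (w j) = if i = j then 2 else 1 := by
      intro i j
      by_cases h : i = j
      · subst h
        rw [QuadraticMap.polar_self, hw1, if_pos rfl]
        norm_num
      · rw [if_neg h]
        exact polar_one q (w i) (w j) (hw1 i) (hw1 j) (hw2 i j h)
    -- the linear map sending eᵢ to wᵢ
    set U : (Fin n → ℚ) →ₗ[ℚ] (Fin n → ℚ) :=
      { toFun := fun x => ∑ i, x i • w i
        map_add' := by intros; simp [add_smul, Finset.sum_add_distrib]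
        map_smul' := by intros; simp [mul_smul, Finset.smul_sum] } with hU
    have hqU : ∀ x : Fin n → ℚ, q (U x) = Sfun n x := by
      intro x
      have hpol : QuadraticMap.polar q (U x) (U x)
          = ∑ i, ∑ j, x i * x j * QuadraticMap.polar q (w i) (w j) := by
        rw [← QuadraticMap.polarBilin_apply_apply]
        show (QuadraticMap.polarBilin q (∑ i, x i • w i)) (∑ j, x j • w j)
          = ∑ i, ∑ j, x i * x j * QuadraticMap.polar q (w i) (w j)
        simp only [map_sum, map_smul, LinearMap.sum_apply, LinearMap.smul_apply,
          smul_eq_mul, Finset.mul_sum, QuadraticMap.polarBilin_apply_apply]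
        refine Finset.sum_congr rfl fun i _ => Finset.sum_congr rfl fun j _ => by
          ring_nf
          rw [QuadraticMap.polar_comm]
      have h2 : QuadraticMap.polar q (U x) (U x) = 2 * q (U x) := by
        rw [QuadraticMap.polar_self, two_smul]; ring
      have h3 : ∑ i, ∑ j, x i * x j * QuadraticMap.polar q (w i) (w j) = 2 * Sfun n x :=
        sum_gram n _ (fun i j => hgram i j) x
      have := h2.symm.trans (hpol.trans h3)
      linarith
    have hUinj : Function.Injective U := by
      rw [injective_iff_map_eq_zero]
      intro x hx
      have : Sfun n x = 0 := by rw [← hqU x, hx, map_zero]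
      exact Sfun_zero n x this
    have hUsurj : Function.Surjective U :=
      (LinearMap.injective_iff_surjective (f := U)).mp hUinj
    set E := LinearEquiv.ofBijective U ⟨hUinj, hUsurj⟩ with hE
    refine ⟨E.symm, fun x => ?_⟩
    have : U (E.symm x) = x := E.apply_symm_apply x
    rw [← hqU (E.symm x), this]
  · rintro ⟨T, hT⟩
    set z : Fin (n + 1) → (Fin n → ℚ) :=
      Fin.cons 0 (fun j : Fin n => (Pi.single j 1 : Fin n → ℚ)) with hz
    have hsingle_ne : ∀ j : Fin n, (Pi.single j 1 : Fin n → ℚ) ≠ 0 := by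
      intro j h
      have := congrFun h j
      simp at this
    have hzinj : Function.Injective z := by
      intro a b hab
      induction a using Fin.cases with
      | zero =>
        induction b using Fin.cases with
        | zero => rfl
        | succ j =>
          exfalso
          apply hsingle_ne j
          simpa [hz] using hab.symm
      | succ i =>
        induction b using Fin.cases with
        | zero =>
          exfalso
          apply hsingle_ne i
          simpa [hz] using hab
        | succ j =>
          have h' : (Pi.single i 1 : Fin n → ℚ) = Pi.single j 1 := by simpa [hz] using hab
          have := congrFun h' i
          by_contra hne
          have hij : i ≠ j := fun h => hne (by rw [h])
          simp [Pi.single_apply, hij] at this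
    have hzsum : ∀ i j : Fin (n + 1), i ≠ j →
        (∑ k, (z i k - z j k))^2 + ∑ k, (z i k - z j k)^2 = 2 := by
      intro i j hij
      have hsum1 : ∀ a : Fin n, ∑ k, (Pi.single a 1 : Fin n → ℚ) k = 1 := by
        intro a; simpa using single_mul_single_sum n a a |>.symm ▸ (by
          simpa [if_pos rfl] using single_mul_single_sum n a a)
      induction i using Fin.cases with
      | zero =>
        induction j using Fin.cases with
        | zero => exact absurd rfl hij
        | succ b =>
          simp only [hz, Fin.cons_zero, Fin.cons_succ, Pi.zero_apply, zero_sub]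
          have h1 := hsum1 b
          have h2 := single_mul_single_sum n b b
          rw [if_pos rfl] at h2
          have e1 : ∑ k, -(Pi.single b 1 : Fin n → ℚ) k = -1 := by
            rw [Finset.sum_neg_distrib, h1]
          have e2 : ∑ k, (-(Pi.single b 1 : Fin n → ℚ) k)^2 = 1 := by
            calc ∑ k, (-(Pi.single b 1 : Fin n → ℚ) k)^2
                = ∑ k, (Pi.single b 1 : Fin n → ℚ) k * (Pi.single b 1 : Fin n → ℚ) k := by
                  refine Finset.sum_congr rfl fun k _ => by ring
              _ = 1 := h2
          rw [e1, e2]; norm_num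
      | succ a =>
        induction j using Fin.cases with
        | zero =>
          simp only [hz, Fin.cons_zero, Fin.cons_succ, Pi.zero_apply, sub_zero]
          have h1 := hsum1 a
          have h2 := single_mul_single_sum n a a
          rw [if_pos rfl] at h2
          have e2 : ∑ k, ((Pi.single a 1 : Fin n → ℚ) k)^2 = 1 := by
            calc ∑ k, ((Pi.single a 1 : Fin n → ℚ) k)^2
                = ∑ k, (Pi.single a 1 : Fin n → ℚ) k * (Pi.single a 1 : Fin n → ℚ) k := by
                  refine Finset.sum_congr rfl fun k _ => by ring
              _ = 1 := h2
          rw [h1, e2]; norm_num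
        | succ b =>
          have hab : a ≠ b := by
            intro h; exact hij (by rw [h])
          simp only [hz, Fin.cons_succ]
          have h1 := hsum1 a
          have h2 := hsum1 b
          have haa := single_mul_single_sum n a a
          have hbb := single_mul_single_sum n b b
          have hab2 := single_mul_single_sum n a b
          rw [if_pos rfl] at haa hbb
          rw [if_neg hab] at hab2
          have e1 : ∑ k, ((Pi.single a 1 : Fin n → ℚ) k - (Pi.single b 1 : Fin n → ℚ) k) = 0 := by
            rw [Finset.sum_sub_distrib, h1, h2, sub_self]
          have e2 : ∑ k, ((Pi.single a 1 : Fin n → ℚ) k - (Pi.single b 1 : Fin n → ℚ) k)^2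
              = 2 := by
            have expand : ∀ k, ((Pi.single a 1 : Fin n → ℚ) k - (Pi.single b 1 : Fin n → ℚ) k)^2
                = (Pi.single a 1 : Fin n → ℚ) k * (Pi.single a 1 : Fin n → ℚ) k
                  - 2 * ((Pi.single a 1 : Fin n → ℚ) k * (Pi.single b 1 : Fin n → ℚ) k)
                  + (Pi.single b 1 : Fin n → ℚ) k * (Pi.single b 1 : Fin n → ℚ) k := by
              intro k; ring
            simp only [expand, Finset.sum_add_distrib, Finset.sum_sub_distrib,
              ← Finset.mul_sum, haa, hbb, hab2]
            norm_num
          rw [e1, e2]; norm_num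
    set u : Fin (n + 1) → (Fin n → ℚ) := fun i => T.symm (z i) with hu
    have huinj : Function.Injective u := fun a b h => hzinj (T.symm.injective h)
    refine ⟨Finset.univ.image u, ?_, ?_⟩
    · intro a ha b hb hab
      obtain ⟨i, _, rfl⟩ := Finset.mem_image.mp ha
      obtain ⟨j, _, rfl⟩ := Finset.mem_image.mp hb
      have hij : i ≠ j := fun h => hab (by rw [h])
      show q (u i - u j) = 1
      have : u i - u j = T.symm (z i - z j) := by rw [hu]; simp [map_sub]
      rw [this, hT, T.apply_symm_apply]
      apply Sfun_one
      have := hzsum i j hij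
      simpa [sub_eq_add_neg] using this
    · rw [Finset.card_image_of_injective _ huinj, Finset.card_univ, Fintype.card_fin]
end

section
/- For every n ≥ 2, there exist n+1 points in ℚⁿ such that the Euclidean distance between every pair is a rational number, and the points are affinely independent (i.e., form a nondegenerate simplex with rational side lengths). -/
def stmt15_pts (n : ℕ) (i : Fin (n+1)) : Fin n → ℚ := fun t =>
  if i.val < 2 * (n / 2) then
    (if (t : ℕ) = 2 * (i.val / 2) then 1 else 0)
      + (if (t : ℕ) = 2 * (i.val / 2) + 1 then (-1 : ℚ) ^ i.val else 0)
  else if i.val = n then (if (t : ℕ) = 0 then 7/4 else 0)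
  else (if (t : ℕ) = 0 then 7/4 else 0) + (if (t : ℕ) = n - 1 then 3 else 0)

lemma pts_val (n : ℕ) (i : Fin (n+1)) (t : Fin n) :
    stmt15_pts n i t =
      if i.val < 2 * (n / 2) then
        (if t.val = 2 * (i.val / 2) then 1 else 0)
          + (if t.val = 2 * (i.val / 2) + 1 then (-1 : ℚ) ^ i.val else 0)
      else if i.val = n then (if t.val = 0 then 7/4 else 0)
      else (if t.val = 0 then (7/4 : ℚ) else 0) + (if t.val = n - 1 then 3 else 0) := rfl

lemma stmt15_sum_support {α : Type*} [Fintype α] [DecidableEq α] (S : Finset α) (f : α → ℚ)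
    (h : ∀ i ∉ S, f i = 0) : ∑ i, f i = ∑ i ∈ S, f i :=
  (Finset.sum_subset (Finset.subset_univ S) fun i _ hi => h i hi).symm

lemma stmt15_classify (n : ℕ) (i : Fin (n+1)) :
    i.val < 2 * (n/2) ∨ i.val = n ∨ (i.val = n - 1 ∧ n % 2 = 1) := by
  have := i.isLt; omega

lemma stmt15_sq_pow (v : ℕ) : ((-1:ℚ) ^ v) ^ 2 = 1 := by
  rw [← pow_mul, mul_comm, pow_mul, neg_one_sq, one_pow]

-- pair vs pair
lemma stmt15_Hpp (n : ℕ) (hn : 2 ≤ n) (i j : Fin (n+1))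
    (hi : i.val < 2 * (n/2)) (hj : j.val < 2 * (n/2)) :
    ∃ c : ℚ, ∑ t : Fin n, (stmt15_pts n i t - stmt15_pts n j t) ^ 2 = c ^ 2 := by
  by_cases hk : i.val / 2 = j.val / 2
  · by_cases hij : i = j
    · exact ⟨0, by simp [hij]⟩
    · have hvne : i.val ≠ j.val := fun h => hij (Fin.ext h)
      refine ⟨(-1:ℚ) ^ i.val - (-1:ℚ) ^ j.val, ?_⟩
      rw [stmt15_sum_support {⟨2*(i.val/2)+1, by omega⟩} _ ?_]
      · rw [Finset.sum_singleton, pts_val, pts_val, if_pos hi, if_pos hj]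
        simp only [Fin.val_mk]
        rw [if_true, if_neg (show ¬(2*(i.val/2)+1 = 2*(i.val/2)) by omega),
          if_neg (show ¬(2*(i.val/2)+1 = 2*(j.val/2)) by omega),
          if_pos (show 2*(i.val/2)+1 = 2*(j.val/2)+1 by omega)]
        ring
      · intro t ht
        simp only [Finset.mem_singleton, Fin.ext_iff, Fin.val_mk] at ht
        rw [pts_val, pts_val, if_pos hi, if_pos hj, if_neg ht,
          if_neg (show ¬(t.val = 2*(j.val/2)+1) by omega)]
        have h2 : 2*(i.val/2) = 2*(j.val/2) := by omega
        rw [h2]; ring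
  · refine ⟨2, ?_⟩
    rw [stmt15_sum_support {⟨2*(i.val/2), by omega⟩, ⟨2*(i.val/2)+1, by omega⟩,
        ⟨2*(j.val/2), by omega⟩, ⟨2*(j.val/2)+1, by omega⟩} _ ?_]
    · rw [Finset.sum_insert (by simp only [Finset.mem_insert, Finset.mem_singleton,
          Fin.ext_iff, Fin.val_mk]; omega),
        Finset.sum_insert (by simp only [Finset.mem_insert, Finset.mem_singleton,
          Fin.ext_iff, Fin.val_mk]; omega),
        Finset.sum_insert (by simp only [Finset.mem_singleton, Fin.ext_iff, Fin.val_mk]; omega),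
        Finset.sum_singleton]
      simp only [pts_val, if_pos hi, if_pos hj, Fin.val_mk]
      simp only [if_true]
      rw [if_neg (show ¬(2*(i.val/2) = 2*(i.val/2)+1) by omega),
        if_neg (show ¬(2*(i.val/2) = 2*(j.val/2)) by omega),
        if_neg (show ¬(2*(i.val/2) = 2*(j.val/2)+1) by omega),
        if_neg (show ¬(2*(i.val/2)+1 = 2*(i.val/2)) by omega),
        if_neg (show ¬(2*(i.val/2)+1 = 2*(j.val/2)) by omega),
        if_neg (show ¬(2*(i.val/2)+1 = 2*(j.val/2)+1) by omega),
        if_neg (show ¬(2*(j.val/2) = 2*(i.val/2)) by omega),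
        if_neg (show ¬(2*(j.val/2) = 2*(i.val/2)+1) by omega),
        if_neg (show ¬(2*(j.val/2) = 2*(j.val/2)+1) by omega),
        if_neg (show ¬(2*(j.val/2)+1 = 2*(i.val/2)) by omega),
        if_neg (show ¬(2*(j.val/2)+1 = 2*(i.val/2)+1) by omega),
        if_neg (show ¬(2*(j.val/2)+1 = 2*(j.val/2)) by omega)]
      linear_combination stmt15_sq_pow i.val + stmt15_sq_pow j.val
    · intro t ht
      simp only [Finset.mem_insert, Finset.mem_singleton, Fin.ext_iff, Fin.val_mk] at ht
      push_neg at ht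
      rw [pts_val, pts_val, if_pos hi, if_pos hj,
        if_neg ht.1, if_neg ht.2.1, if_neg ht.2.2.1, if_neg ht.2.2.2]
      ring

-- pair vs q
lemma stmt15_Hpq (n : ℕ) (hn : 2 ≤ n) (i j : Fin (n+1))
    (hi : i.val < 2 * (n/2)) (hj : j.val = n) :
    ∃ c : ℚ, ∑ t : Fin n, (stmt15_pts n i t - stmt15_pts n j t) ^ 2 = c ^ 2 := by
  have hjlt : ¬(j.val < 2*(n/2)) := by omega
  by_cases hk : i.val / 2 = 0
  · refine ⟨5/4, ?_⟩
    rw [stmt15_sum_support {⟨0, by omega⟩, ⟨1, by omega⟩} _ ?_]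
    · rw [Finset.sum_insert (by simp only [Finset.mem_singleton, Fin.ext_iff, Fin.val_mk]; omega),
        Finset.sum_singleton]
      simp only [pts_val, if_pos hi, if_neg hjlt, if_pos hj, Fin.val_mk, if_true]
      rw [if_pos (show (0:ℕ) = 2*(i.val/2) by omega),
        if_neg (show ¬((0:ℕ) = 2*(i.val/2)+1) by omega),
        if_neg (show ¬((1:ℕ) = 2*(i.val/2)) by omega),
        if_pos (show (1:ℕ) = 2*(i.val/2)+1 by omega),
        if_neg (show ¬((1:ℕ) = 0) by omega)]
      linear_combination stmt15_sq_pow i.val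
    · intro t ht
      simp only [Finset.mem_insert, Finset.mem_singleton, Fin.ext_iff, Fin.val_mk] at ht
      push_neg at ht
      rw [pts_val, pts_val, if_pos hi, if_neg hjlt, if_pos hj,
        if_neg (show ¬(t.val = 2*(i.val/2)) by omega),
        if_neg (show ¬(t.val = 2*(i.val/2)+1) by omega), if_neg ht.1]
      ring
  · refine ⟨9/4, ?_⟩
    rw [stmt15_sum_support {⟨0, by omega⟩, ⟨2*(i.val/2), by omega⟩, ⟨2*(i.val/2)+1, by omega⟩} _ ?_]
    · rw [Finset.sum_insert (by simp only [Finset.mem_insert, Finset.mem_singleton,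
          Fin.ext_iff, Fin.val_mk]; omega),
        Finset.sum_insert (by simp only [Finset.mem_singleton, Fin.ext_iff, Fin.val_mk]; omega),
        Finset.sum_singleton]
      simp only [pts_val, if_pos hi, if_neg hjlt, if_pos hj, Fin.val_mk, if_true]
      rw [if_neg (show ¬((0:ℕ) = 2*(i.val/2)) by omega),
        if_neg (show ¬((0:ℕ) = 2*(i.val/2)+1) by omega),
        if_neg (show ¬(2*(i.val/2) = 2*(i.val/2)+1) by omega),
        if_neg (show ¬(2*(i.val/2) = 0) by omega),
        if_neg (show ¬(2*(i.val/2)+1 = 2*(i.val/2)) by omega),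
        if_neg (show ¬(2*(i.val/2)+1 = 0) by omega)]
      linear_combination stmt15_sq_pow i.val
    · intro t ht
      simp only [Finset.mem_insert, Finset.mem_singleton, Fin.ext_iff, Fin.val_mk] at ht
      push_neg at ht
      rw [pts_val, pts_val, if_pos hi, if_neg hjlt, if_pos hj,
        if_neg ht.2.1, if_neg ht.2.2, if_neg ht.1]
      ring

-- pair vs s
lemma stmt15_Hps (n : ℕ) (hn : 2 ≤ n) (i j : Fin (n+1))
    (hi : i.val < 2 * (n/2)) (hj : j.val = n - 1 ∧ n % 2 = 1) :
    ∃ c : ℚ, ∑ t : Fin n, (stmt15_pts n i t - stmt15_pts n j t) ^ 2 = c ^ 2 := by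
  have hjlt : ¬(j.val < 2*(n/2)) := by omega
  have hjn : ¬(j.val = n) := by omega
  by_cases hk : i.val / 2 = 0
  · refine ⟨13/4, ?_⟩
    rw [stmt15_sum_support {⟨0, by omega⟩, ⟨1, by omega⟩, ⟨n-1, by omega⟩} _ ?_]
    · rw [Finset.sum_insert (by simp only [Finset.mem_insert, Finset.mem_singleton,
          Fin.ext_iff, Fin.val_mk]; omega),
        Finset.sum_insert (by simp only [Finset.mem_singleton, Fin.ext_iff, Fin.val_mk]; omega),
        Finset.sum_singleton]
      simp only [pts_val, if_pos hi, if_neg hjlt, if_neg hjn, Fin.val_mk, if_true]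
      rw [if_pos (show (0:ℕ) = 2*(i.val/2) by omega),
        if_neg (show ¬((0:ℕ) = 2*(i.val/2)+1) by omega),
        if_neg (show ¬((0:ℕ) = n-1) by omega),
        if_neg (show ¬((1:ℕ) = 2*(i.val/2)) by omega),
        if_pos (show (1:ℕ) = 2*(i.val/2)+1 by omega),
        if_neg (show ¬((1:ℕ) = 0) by omega),
        if_neg (show ¬((1:ℕ) = n-1) by omega),
        if_neg (show ¬(n-1 = 2*(i.val/2)) by omega),
        if_neg (show ¬(n-1 = 2*(i.val/2)+1) by omega),
        if_neg (show ¬(n-1 = 0) by omega)]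
      linear_combination stmt15_sq_pow i.val
    · intro t ht
      simp only [Finset.mem_insert, Finset.mem_singleton, Fin.ext_iff, Fin.val_mk] at ht
      push_neg at ht
      rw [pts_val, pts_val, if_pos hi, if_neg hjlt, if_neg hjn,
        if_neg (show ¬(t.val = 2*(i.val/2)) by omega),
        if_neg (show ¬(t.val = 2*(i.val/2)+1) by omega), if_neg ht.1, if_neg ht.2.2]
      ring
  · refine ⟨15/4, ?_⟩
    rw [stmt15_sum_support {⟨0, by omega⟩, ⟨2*(i.val/2), by omega⟩, ⟨2*(i.val/2)+1, by omega⟩,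
        ⟨n-1, by omega⟩} _ ?_]
    · rw [Finset.sum_insert (by simp only [Finset.mem_insert, Finset.mem_singleton,
          Fin.ext_iff, Fin.val_mk]; omega),
        Finset.sum_insert (by simp only [Finset.mem_insert, Finset.mem_singleton,
          Fin.ext_iff, Fin.val_mk]; omega),
        Finset.sum_insert (by simp only [Finset.mem_singleton, Fin.ext_iff, Fin.val_mk]; omega),
        Finset.sum_singleton]
      simp only [pts_val, if_pos hi, if_neg hjlt, if_neg hjn, Fin.val_mk, if_true]
      rw [if_neg (show ¬((0:ℕ) = 2*(i.val/2)) by omega),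
        if_neg (show ¬((0:ℕ) = 2*(i.val/2)+1) by omega),
        if_neg (show ¬((0:ℕ) = n-1) by omega),
        if_neg (show ¬(2*(i.val/2) = 2*(i.val/2)+1) by omega),
        if_neg (show ¬(2*(i.val/2) = 0) by omega),
        if_neg (show ¬(2*(i.val/2) = n-1) by omega),
        if_neg (show ¬(2*(i.val/2)+1 = 2*(i.val/2)) by omega),
        if_neg (show ¬(2*(i.val/2)+1 = 0) by omega),
        if_neg (show ¬(2*(i.val/2)+1 = n-1) by omega),
        if_neg (show ¬(n-1 = 2*(i.val/2)) by omega),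
        if_neg (show ¬(n-1 = 2*(i.val/2)+1) by omega),
        if_neg (show ¬(n-1 = 0) by omega)]
      linear_combination stmt15_sq_pow i.val
    · intro t ht
      simp only [Finset.mem_insert, Finset.mem_singleton, Fin.ext_iff, Fin.val_mk] at ht
      push_neg at ht
      rw [pts_val, pts_val, if_pos hi, if_neg hjlt, if_neg hjn,
        if_neg ht.2.1, if_neg ht.2.2.1, if_neg ht.1, if_neg ht.2.2.2]
      ring

-- q vs s
lemma stmt15_Hqs (n : ℕ) (hn : 2 ≤ n) (i j : Fin (n+1))
    (hi : i.val = n) (hj : j.val = n - 1 ∧ n % 2 = 1) :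
    ∃ c : ℚ, ∑ t : Fin n, (stmt15_pts n i t - stmt15_pts n j t) ^ 2 = c ^ 2 := by
  have hilt : ¬(i.val < 2*(n/2)) := by omega
  have hjlt : ¬(j.val < 2*(n/2)) := by omega
  have hjn : ¬(j.val = n) := by omega
  refine ⟨3, ?_⟩
  rw [stmt15_sum_support {⟨n-1, by omega⟩} _ ?_]
  · rw [Finset.sum_singleton]
    simp only [pts_val, if_neg hilt, if_pos hi, if_neg hjlt, if_neg hjn, Fin.val_mk, if_true]
    rw [if_neg (show ¬(n-1 = 0) by omega)]
    norm_num
  · intro t ht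
    simp only [Finset.mem_singleton, Fin.ext_iff, Fin.val_mk] at ht
    rw [pts_val, pts_val, if_neg hilt, if_pos hi, if_neg hjlt, if_neg hjn, if_neg ht]
    ring

lemma pts_eq_zero (n : ℕ) (i : Fin (n+1)) (t : Fin n)
    (h1 : i.val < 2*(n/2) → t.val ≠ 2*(i.val/2) ∧ t.val ≠ 2*(i.val/2)+1)
    (h2 : ¬(i.val < 2*(n/2)) → t.val ≠ 0)
    (h3 : i.val = n-1 → n % 2 = 1 → t.val ≠ n-1) : stmt15_pts n i t = 0 := by
  rw [pts_val]
  rcases stmt15_classify n i with h | h | h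
  · rw [if_pos h, if_neg (h1 h).1, if_neg (h1 h).2]; ring
  · have hlt : ¬(i.val < 2*(n/2)) := by omega
    rw [if_neg hlt, if_pos h, if_neg (h2 hlt)]
  · have hlt : ¬(i.val < 2*(n/2)) := by omega
    rw [if_neg hlt, if_neg (by omega), if_neg (h2 hlt), if_neg (h3 h.1 h.2)]; ring

lemma stmt15_indep (n : ℕ) (hn : 2 ≤ n) : AffineIndependent ℚ (stmt15_pts n) := by
  rw [affineIndependent_iff_of_fintype]
  intro w hw0 hws
  rw [Finset.weightedVSub_eq_linear_combination _ hw0] at hws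
  have hw : ∀ t : Fin n, ∑ i, w i * stmt15_pts n i t = 0 := fun t => by
    have h := congrFun hws t
    simpa using h
  have E1 : ∀ k (hk : k < n/2), w ⟨2*k, by omega⟩ = w ⟨2*k+1, by omega⟩ := by
    intro k hk
    have h := (stmt15_sum_support {⟨2*k, by omega⟩, ⟨2*k+1, by omega⟩}
        (fun i => w i * stmt15_pts n i ⟨2*k+1, by omega⟩) ?_).symm.trans (hw ⟨2*k+1, by omega⟩)
    · rw [Finset.sum_insert (by simp only [Finset.mem_singleton, Fin.ext_iff, Fin.val_mk]; omega),
        Finset.sum_singleton, pts_val, pts_val] at h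
      simp only [Fin.val_mk, if_true] at h
      rw [if_pos (show 2*k < 2*(n/2) by omega), if_pos (show 2*k+1 < 2*(n/2) by omega),
        if_neg (show ¬(2*k+1 = 2*(2*k/2)) by omega),
        if_pos (show 2*k+1 = 2*(2*k/2)+1 by omega),
        if_neg (show ¬(2*k+1 = 2*((2*k+1)/2)) by omega),
        if_pos (show 2*k+1 = 2*((2*k+1)/2)+1 by omega),
        (show ((-1:ℚ))^(2*k) = 1 from Even.neg_one_pow ⟨k, by ring⟩),
        (show ((-1:ℚ))^(2*k+1) = -1 from Odd.neg_one_pow ⟨k, by ring⟩)] at h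
      linarith
    · intro i hi
      simp only [Finset.mem_insert, Finset.mem_singleton, Fin.ext_iff, Fin.val_mk] at hi
      push_neg at hi
      exact mul_eq_zero_of_right _ (pts_eq_zero n i _
        (fun hp => by simp only [Fin.val_mk]; omega)
        (fun hq => by simp only [Fin.val_mk]; omega)
        (fun hs1 hs2 => by simp only [Fin.val_mk]; omega))
  have E2 : ∀ k (hk1 : 1 ≤ k) (hk : k < n/2), w ⟨2*k, by omega⟩ + w ⟨2*k+1, by omega⟩ = 0 := by
    intro k hk1 hk
    have h := (stmt15_sum_support {⟨2*k, by omega⟩, ⟨2*k+1, by omega⟩}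
        (fun i => w i * stmt15_pts n i ⟨2*k, by omega⟩) ?_).symm.trans (hw ⟨2*k, by omega⟩)
    · rw [Finset.sum_insert (by simp only [Finset.mem_singleton, Fin.ext_iff, Fin.val_mk]; omega),
        Finset.sum_singleton, pts_val, pts_val] at h
      simp only [Fin.val_mk, if_true] at h
      rw [if_pos (show 2*k < 2*(n/2) by omega), if_pos (show 2*k+1 < 2*(n/2) by omega),
        if_pos (show 2*k = 2*(2*k/2) by omega),
        if_neg (show ¬(2*k = 2*(2*k/2)+1) by omega),
        if_pos (show 2*k = 2*((2*k+1)/2) by omega),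
        if_neg (show ¬(2*k = 2*((2*k+1)/2)+1) by omega)] at h
      linarith
    · intro i hi
      simp only [Finset.mem_insert, Finset.mem_singleton, Fin.ext_iff, Fin.val_mk] at hi
      push_neg at hi
      exact mul_eq_zero_of_right _ (pts_eq_zero n i _
        (fun hp => by simp only [Fin.val_mk]; omega)
        (fun hq => by simp only [Fin.val_mk]; omega)
        (fun hs1 hs2 => by simp only [Fin.val_mk]; omega))
  have E3 : n % 2 = 1 → w ⟨n-1, by omega⟩ = 0 := by
    intro hodd
    have h := (stmt15_sum_support {⟨n-1, by omega⟩}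
        (fun i => w i * stmt15_pts n i ⟨n-1, by omega⟩) ?_).symm.trans (hw ⟨n-1, by omega⟩)
    · rw [Finset.sum_singleton, pts_val] at h
      simp only [Fin.val_mk, if_true] at h
      rw [if_neg (show ¬(n-1 < 2*(n/2)) by omega), if_neg (show ¬(n-1 = n) by omega),
        if_neg (show ¬(n-1 = 0) by omega)] at h
      linarith
    · intro i hi
      simp only [Finset.mem_singleton, Fin.ext_iff, Fin.val_mk] at hi
      exact mul_eq_zero_of_right _ (pts_eq_zero n i _
        (fun hp => by simp only [Fin.val_mk]; omega)
        (fun hq => by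
          simp only [Fin.val_mk]
          rcases stmt15_classify n i with h | h | h <;> omega)
        (fun hs1 hs2 => by simp only [Fin.val_mk]; omega))
  have Ez : ∀ i : Fin (n+1), 2 ≤ i.val → i.val < n → w i = 0 := by
    intro i h2 h3
    rcases stmt15_classify n i with h | h | h
    · have hk1 : 1 ≤ i.val / 2 := by omega
      have e1 := E1 (i.val/2) (by omega)
      have e2 := E2 (i.val/2) hk1 (by omega)
      have : i.val = 2*(i.val/2) ∨ i.val = 2*(i.val/2)+1 := by omega
      rcases this with h' | h'
      · rw [show i = ⟨2*(i.val/2), by omega⟩ from Fin.ext (by exact h')]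
        linarith
      · rw [show i = ⟨2*(i.val/2)+1, by omega⟩ from Fin.ext (by exact h')]
        linarith
    · omega
    · rw [show i = ⟨n-1, by omega⟩ from Fin.ext (by exact h.1)]
      exact E3 h.2
  have E4 : w ⟨0, by omega⟩ = w ⟨1, by omega⟩ := by
    have h := (stmt15_sum_support {⟨0, by omega⟩, ⟨1, by omega⟩}
        (fun i => w i * stmt15_pts n i ⟨1, by omega⟩) ?_).symm.trans (hw ⟨1, by omega⟩)
    · rw [Finset.sum_insert (by simp only [Finset.mem_singleton, Fin.ext_iff, Fin.val_mk]; omega),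
        Finset.sum_singleton, pts_val, pts_val] at h
      simp only [Fin.val_mk, if_true] at h
      rw [if_pos (show 0 < 2*(n/2) by omega), if_pos (show 1 < 2*(n/2) by omega)] at h
      norm_num at h
      rw [show (0 : Fin (n+1)) = ⟨0, by omega⟩ from Fin.ext (by simp)] at h
      linarith
    · intro i hi
      simp only [Finset.mem_insert, Finset.mem_singleton, Fin.ext_iff, Fin.val_mk] at hi
      push_neg at hi
      exact mul_eq_zero_of_right _ (pts_eq_zero n i _
        (fun hp => by simp only [Fin.val_mk]; omega)
        (fun hq => by simp only [Fin.val_mk]; omega)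
        (fun hs1 hs2 => by simp only [Fin.val_mk]; omega))
  have E5 : w ⟨0, by omega⟩ + w ⟨1, by omega⟩ + 7/4 * w ⟨n, by omega⟩ = 0 := by
    have h := (stmt15_sum_support {⟨0, by omega⟩, ⟨1, by omega⟩, ⟨n, by omega⟩}
        (fun i => w i * stmt15_pts n i ⟨0, by omega⟩) ?_).symm.trans (hw ⟨0, by omega⟩)
    · rw [Finset.sum_insert (by simp only [Finset.mem_insert, Finset.mem_singleton,
          Fin.ext_iff, Fin.val_mk]; omega),
        Finset.sum_insert (by simp only [Finset.mem_singleton, Fin.ext_iff, Fin.val_mk]; omega),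
        Finset.sum_singleton, pts_val, pts_val, pts_val] at h
      simp only [Fin.val_mk, if_true] at h
      rw [if_pos (show 0 < 2*(n/2) by omega), if_pos (show 1 < 2*(n/2) by omega),
        if_neg (show ¬(n < 2*(n/2)) by omega)] at h
      norm_num at h
      rw [show (0 : Fin (n+1)) = ⟨0, by omega⟩ from Fin.ext (by simp)] at h
      linarith
    · intro i hi
      simp only [Finset.mem_insert, Finset.mem_singleton, Fin.ext_iff, Fin.val_mk] at hi
      push_neg at hi
      have hi2 : 2 ≤ i.val := by
        have := i.isLt
        rcases stmt15_classify n i with h | h | h <;> omega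
      exact mul_eq_zero_of_left (Ez i hi2 (by have := i.isLt; omega)) _
  have E6 : w ⟨0, by omega⟩ + w ⟨1, by omega⟩ + w ⟨n, by omega⟩ = 0 := by
    have h := (stmt15_sum_support {⟨0, by omega⟩, ⟨1, by omega⟩, ⟨n, by omega⟩} w ?_).symm.trans hw0
    · rw [Finset.sum_insert (by simp only [Finset.mem_insert, Finset.mem_singleton,
          Fin.ext_iff, Fin.val_mk]; omega),
        Finset.sum_insert (by simp only [Finset.mem_singleton, Fin.ext_iff, Fin.val_mk]; omega),
        Finset.sum_singleton] at h
      linarith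
    · intro i hi
      simp only [Finset.mem_insert, Finset.mem_singleton, Fin.ext_iff, Fin.val_mk] at hi
      push_neg at hi
      have hi2 : 2 ≤ i.val := by
        rcases stmt15_classify n i with h | h | h <;> omega
      exact Ez i hi2 (by have := i.isLt; omega)
  have w0 : w ⟨0, by omega⟩ = 0 := by linarith
  intro i
  rcases Nat.lt_or_ge i.val 2 with h | h
  · have : i.val = 0 ∨ i.val = 1 := by omega
    rcases this with h' | h'
    · rw [show i = ⟨0, by omega⟩ from Fin.ext (by exact h')]; exact w0
    · rw [show i = ⟨1, by omega⟩ from Fin.ext (by exact h')]; linarith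
  · rcases Nat.lt_or_ge i.val n with h' | h'
    · exact Ez i h h'
    · have : i.val = n := by have := i.isLt; omega
      rw [show i = ⟨n, by omega⟩ from Fin.ext (by exact this)]
      linarith


/-- For every `n ≥ 2` there is a nondegenerate simplex in `ℚⁿ` with all pairwise
Euclidean distances rational. -/
theorem stmt_15 (n : ℕ) (hn : 2 ≤ n) :
    ∃ p : Fin (n + 1) → (Fin n → ℚ), AffineIndependent ℚ p ∧
      ∀ i j : Fin (n + 1), ∃ c : ℚ, ∑ t, (p i t - p j t) ^ 2 = c ^ 2 := by
  refine ⟨stmt15_pts n, stmt15_indep n hn, ?_⟩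
  have symm : ∀ a b : Fin (n+1),
      (∃ c : ℚ, ∑ t, (stmt15_pts n a t - stmt15_pts n b t) ^ 2 = c ^ 2) →
      ∃ c : ℚ, ∑ t, (stmt15_pts n b t - stmt15_pts n a t) ^ 2 = c ^ 2 := by
    rintro a b ⟨c, hc⟩
    exact ⟨c, by rw [← hc]; exact Finset.sum_congr rfl fun t _ => by ring⟩
  intro i j
  rcases stmt15_classify n i with hi | hi | hi <;> rcases stmt15_classify n j with hj | hj | hj
  · exact stmt15_Hpp n hn i j hi hj
  · exact stmt15_Hpq n hn i j hi hj
  · exact stmt15_Hps n hn i j hi hj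
  · exact symm j i (stmt15_Hpq n hn j i hj hi)
  · exact ⟨0, by rw [show i = j from Fin.ext (by omega)]; simp⟩
  · exact stmt15_Hqs n hn i j hi hj
  · exact symm j i (stmt15_Hps n hn j i hj hi)
  · exact symm j i (stmt15_Hqs n hn j i hj hi)
  · exact ⟨0, by rw [show i = j from Fin.ext (by omega)]; simp⟩
end

section
/- Any graph automorphism of the connected component of 0 in the unit distance graph on ℚⁿ (x ~ y iff Σ(xᵢ−yᵢ)² = 1) fixing 0 preserves all distances, i.e., is an isometry of ℚⁿ restricted to the component (rational Beckman–Quarles theorem). -/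
/-- The unit-distance graph on `ℚⁿ`: `x ~ y` iff `∑ (xᵢ − yᵢ)² = 1`. -/
def euclGraph (n : ℕ) : SimpleGraph (Fin n → ℚ) where
  Adj x y := ∑ i, (x i - y i) ^ 2 = 1
  symm := by
    constructor
    intro x y h
    show ∑ i, (y i - x i) ^ 2 = 1
    rw [← h]
    exact Finset.sum_congr rfl fun i _ => by ring
  loopless := by constructor; intro x h; simp at h

/-- The connected component of the origin. -/
def comp0 (n : ℕ) : Set (Fin n → ℚ) := {v | (euclGraph n).Reachable 0 v}

namespace BQ
variable {n : ℕ}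

lemma adj_iff {x y : Fin n → ℚ} :
    (euclGraph n).Adj x y ↔ ∑ i, (x i - y i) ^ 2 = 1 := Iff.rfl

lemma reach_ind {P : (Fin n → ℚ) → Prop}
    (h : ∀ a b, (euclGraph n).Adj a b → P a → P b)
    {a b} (hr : (euclGraph n).Reachable a b) (ha : P a) : P b := by
  obtain ⟨w⟩ := hr
  induction w with
  | nil => exact ha
  | cons h' p ih => exact ih (h _ _ h' ha)

lemma adj_of_adj_shift {t a b : Fin n → ℚ} (h : (euclGraph n).Adj a b) :
    (euclGraph n).Adj (t + a) (t + b) := by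
  rw [adj_iff] at h ⊢
  rw [← h]
  exact Finset.sum_congr rfl fun i _ => by simp only [Pi.add_apply]; ring

lemma mem_comp0 {v : Fin n → ℚ} : v ∈ comp0 n ↔ (euclGraph n).Reachable 0 v := Iff.rfl

lemma zero_mem : (0 : Fin n → ℚ) ∈ comp0 n := SimpleGraph.Reachable.refl 0

lemma add_mem {x y : Fin n → ℚ} (hx : x ∈ comp0 n) (hy : y ∈ comp0 n) :
    x + y ∈ comp0 n := by
  have h2 : (euclGraph n).Reachable (x + 0) (x + y) :=
    reach_ind (P := fun z => (euclGraph n).Reachable (x + 0) (x + z))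
      (fun a b hab hr => hr.trans (adj_of_adj_shift hab).reachable) hy
      (SimpleGraph.Reachable.refl _)
  rw [mem_comp0]; simpa using hx.trans (by simpa using h2)

lemma neg_mem {x : Fin n → ℚ} (hx : x ∈ comp0 n) : -x ∈ comp0 n := by
  refine reach_ind (P := fun z => -z ∈ comp0 n)
    (fun a b hab hr => hr.trans ?_) hx (by simpa using zero_mem)
  refine SimpleGraph.Adj.reachable ?_
  rw [adj_iff] at hab ⊢
  rw [← hab]
  exact Finset.sum_congr rfl fun i _ => by simp only [Pi.neg_apply]; ring

lemma sub_mem {x y : Fin n → ℚ} (hx : x ∈ comp0 n) (hy : y ∈ comp0 n) :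
    x - y ∈ comp0 n := by
  have := add_mem hx (neg_mem hy); simpa [sub_eq_add_neg] using this

lemma unit_mem {u : Fin n → ℚ} (hu : ∑ i, (u i) ^ 2 = 1) : u ∈ comp0 n := by
  refine SimpleGraph.Adj.reachable ?_
  rw [adj_iff, ← hu]
  exact Finset.sum_congr rfl fun i _ => by simp only [Pi.zero_apply]; ring

lemma add_unit_mem {x u : Fin n → ℚ} (hx : x ∈ comp0 n) (hu : ∑ i, (u i) ^ 2 = 1) :
    x + u ∈ comp0 n := add_mem hx (unit_mem hu)

lemma sos_eq_zero {f : Fin n → ℚ} (h : ∑ i, (f i) ^ 2 = 0) : ∀ i, f i = 0 := by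
  intro i
  have h2 := (Finset.sum_eq_zero_iff_of_nonneg (fun i _ => sq_nonneg (f i))).mp h i
    (Finset.mem_univ i)
  exact pow_eq_zero_iff (by norm_num) |>.mp h2

/-- if x is a common neighbor of z,w and |z-w|²=4 then x is the midpoint. -/
lemma unique_mid {z w x : Fin n → ℚ}
    (h1 : ∑ i, (z i - x i) ^ 2 = 1) (h2 : ∑ i, (x i - w i) ^ 2 = 1)
    (h4 : ∑ i, (z i - w i) ^ 2 = 4) : x + x = z + w := by
  have key : ∑ i, ((z i - x i) - (x i - w i)) ^ 2 = 0 := by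
    have e : ∀ i ∈ Finset.univ, ((z i - x i) - (x i - w i)) ^ 2
        = 2 * (z i - x i) ^ 2 + 2 * (x i - w i) ^ 2 - (z i - w i) ^ 2 :=
      fun i _ => by ring
    rw [Finset.sum_congr rfl e, Finset.sum_sub_distrib, Finset.sum_add_distrib,
      ← Finset.mul_sum, ← Finset.mul_sum, h1, h2, h4]
    norm_num
  funext i
  have := sos_eq_zero key i
  simp only [Pi.add_apply]
  linarith

/-- the cancellation lemma: two parallel arithmetic progressions at unit distance
pointwise must have the same common difference. -/
lemma cancel_lemma {a A1 A2 b B1 B2 : Fin n → ℚ}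
    (hA : a + A2 = A1 + A1) (hB : b + B2 = B1 + B1)
    (e0 : ∑ i, (b i - a i) ^ 2 = 1) (e1 : ∑ i, (B1 i - A1 i) ^ 2 = 1)
    (e2 : ∑ i, (B2 i - A2 i) ^ 2 = 1) : B1 - b = A1 - a := by
  have hA' : ∀ i, a i + A2 i = A1 i + A1 i := fun i => congrFun hA i
  have hB' : ∀ i, b i + B2 i = B1 i + B1 i := fun i => congrFun hB i
  have key : ∑ i, ((B1 i - b i) - (A1 i - a i)) ^ 2 = 0 := by
    have e : ∀ i ∈ Finset.univ, ((B1 i - b i) - (A1 i - a i)) ^ 2 * 2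
        = (B2 i - A2 i) ^ 2 - 2 * (B1 i - A1 i) ^ 2 + (b i - a i) ^ 2 := by
      intro i _
      have h1 := hA' i; have h2 := hB' i
      have hA2 : A2 i = A1 i + A1 i - a i := by linarith
      have hB2 : B2 i = B1 i + B1 i - b i := by linarith
      rw [hA2, hB2]; ring
    have : (∑ i, ((B1 i - b i) - (A1 i - a i)) ^ 2) * 2
        = ∑ i, ((B2 i - A2 i) ^ 2 - 2 * (B1 i - A1 i) ^ 2 + (b i - a i) ^ 2) := by
      rw [Finset.sum_mul]; exact Finset.sum_congr rfl e
    rw [Finset.sum_add_distrib, Finset.sum_sub_distrib, ← Finset.mul_sum,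
      e0, e1, e2] at this
    linarith
  funext i
  have := sos_eq_zero key i
  simp only [Pi.sub_apply]
  linarith

section Phi
variable (φ : (euclGraph n).induce (comp0 n) ≃g (euclGraph n).induce (comp0 n))

def psi (x : ↥(comp0 n)) : Fin n → ℚ := (φ x).1

lemma psi_congr {x y : Fin n → ℚ} (hx : x ∈ comp0 n) (hy : y ∈ comp0 n)
    (h : x = y) : psi φ ⟨x, hx⟩ = psi φ ⟨y, hy⟩ := by subst h; rfl

lemma psi_adj {a b : ↥(comp0 n)} (h : ∑ i, (a.1 i - b.1 i) ^ 2 = 1) :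
    ∑ i, (psi φ a i - psi φ b i) ^ 2 = 1 := by
  have h2 : ((euclGraph n).induce (comp0 n)).Adj a b := h
  exact φ.map_adj_iff.mpr h2

lemma dsq_comm (x y : Fin n → ℚ) :
    ∑ i, (x i - y i) ^ 2 = ∑ i, (y i - x i) ^ 2 :=
  Finset.sum_congr rfl fun i _ => by ring

/-- midpoint transfer: if m is the midpoint of z,w with |z-w|²=4 then
φ maps m to the midpoint of φz, φw. -/
lemma psi_mid (z w m : ↥(comp0 n)) (hm : m.1 + m.1 = z.1 + w.1)
    (hzm : ∑ i, (z.1 i - m.1 i) ^ 2 = 1)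
    (hzw : ∑ i, (z.1 i - w.1 i) ^ 2 = 4) :
    psi φ z + psi φ w = psi φ m + psi φ m := by
  have hwm : ∑ i, (w.1 i - m.1 i) ^ 2 = 1 := by
    rw [← hzm]
    refine Finset.sum_congr rfl fun i _ => ?_
    have := congrFun hm i
    simp only [Pi.add_apply] at this
    have : w.1 i - m.1 i = -(z.1 i - m.1 i) := by linarith
    rw [this]; ring
  -- the reflected common neighbor downstairs
  set y' : Fin n → ℚ := psi φ z + psi φ w - psi φ m with hy'
  have hyz : ∑ i, (y' i - psi φ z i) ^ 2 = 1 := by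
    have : ∀ i ∈ Finset.univ, (y' i - psi φ z i) ^ 2 = (psi φ w i - psi φ m i) ^ 2 := by
      intro i _
      simp only [hy', Pi.sub_apply, Pi.add_apply]
      ring
    rw [Finset.sum_congr rfl this]
    exact psi_adj φ hwm
  have hyw : ∑ i, (y' i - psi φ w i) ^ 2 = 1 := by
    have : ∀ i ∈ Finset.univ, (y' i - psi φ w i) ^ 2 = (psi φ z i - psi φ m i) ^ 2 := by
      intro i _
      simp only [hy', Pi.sub_apply, Pi.add_apply]
      ring
    rw [Finset.sum_congr rfl this]
    exact psi_adj φ hzm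
  -- y' is in the component
  have hy'mem : y' ∈ comp0 n := by
    refine (φ z).2.trans (SimpleGraph.Adj.reachable ?_)
    rw [adj_iff, dsq_comm]
    exact hyz
  set Y : ↥(comp0 n) := ⟨y', hy'mem⟩ with hY
  -- pull back with φ⁻¹ : X is a common neighbor of z,w upstairs
  set X : ↥(comp0 n) := φ.symm Y with hX
  have hXz : ∑ i, (z.1 i - X.1 i) ^ 2 = 1 := by
    have hadj : ((euclGraph n).induce (comp0 n)).Adj (φ X) (φ z) := by
      have : φ X = Y := φ.apply_symm_apply Y
      rw [this]
      exact hyz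
    have := φ.map_adj_iff.mp hadj
    rw [dsq_comm]
    exact this
  have hXw : ∑ i, (X.1 i - w.1 i) ^ 2 = 1 := by
    have hadj : ((euclGraph n).induce (comp0 n)).Adj (φ X) (φ w) := by
      have : φ X = Y := φ.apply_symm_apply Y
      rw [this]
      exact hyw
    exact φ.map_adj_iff.mp hadj
  have hXmid : X.1 + X.1 = z.1 + w.1 := unique_mid hXz hXw hzw
  have hXm : X = m := by
    apply Subtype.ext
    funext i
    have h1 := congrFun hXmid i
    have h2 := congrFun hm i
    simp only [Pi.add_apply] at h1 h2
    linarith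
  have hYφm : Y = φ m := by rw [← hXm, hX, φ.apply_symm_apply]
  have hfin : y' = psi φ m := congrArg Subtype.val hYφm
  rw [hy'] at hfin
  funext i
  have := congrFun hfin i
  simp only [Pi.sub_apply, Pi.add_apply] at this ⊢
  linarith

/-- two steps along a unit vector: φ is midpoint-affine. -/
lemma psi_two_step {x u : Fin n → ℚ} (hx : x ∈ comp0 n) (hu : ∑ i, (u i) ^ 2 = 1) :
    psi φ ⟨x, hx⟩ + psi φ ⟨x + u + u, add_unit_mem (add_unit_mem hx hu) hu⟩
      = psi φ ⟨x + u, add_unit_mem hx hu⟩ + psi φ ⟨x + u, add_unit_mem hx hu⟩ := by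
  refine psi_mid φ ⟨x, hx⟩ ⟨x + u + u, _⟩ ⟨x + u, _⟩ ?_ ?_ ?_
  · funext i; simp only [Pi.add_apply]; ring
  · rw [← hu]
    exact Finset.sum_congr rfl fun i _ => by simp only [Pi.add_apply]; ring
  · have : ∀ i ∈ Finset.univ, (x i - (x + u + u) i) ^ 2 = 4 * (u i) ^ 2 := by
      intro i _; simp only [Pi.add_apply]; ring
    rw [Finset.sum_congr rfl this, ← Finset.mul_sum, hu]
    norm_num

/-- the step vector of `u` is invariant under moving the base point by a unit `v`. -/
lemma delta_step {x u v : Fin n → ℚ} (hx : x ∈ comp0 n)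
    (hu : ∑ i, (u i) ^ 2 = 1) (hv : ∑ i, (v i) ^ 2 = 1) :
    psi φ ⟨x + v + u, add_unit_mem (add_unit_mem hx hv) hu⟩ - psi φ ⟨x + v, add_unit_mem hx hv⟩
      = psi φ ⟨x + u, add_unit_mem hx hu⟩ - psi φ ⟨x, hx⟩ := by
  have hA := psi_two_step φ hx hu
  have hB := psi_two_step φ (add_unit_mem hx hv) hu
  refine cancel_lemma hA hB ?_ ?_ ?_
  · refine psi_adj φ ?_
    rw [← hv]
    exact Finset.sum_congr rfl fun i _ => by simp only [Pi.add_apply]; ring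
  · refine psi_adj φ ?_
    rw [← hv]
    exact Finset.sum_congr rfl fun i _ => by simp only [Pi.add_apply]; ring
  · refine psi_adj φ ?_
    rw [← hv]
    exact Finset.sum_congr rfl fun i _ => by simp only [Pi.add_apply]; ring

lemma psi_zero (h0 : (0 : Fin n → ℚ) ∈ comp0 n) (hφ0 : φ ⟨0, h0⟩ = ⟨0, h0⟩)
    (h : (0 : Fin n → ℚ) ∈ comp0 n) : psi φ ⟨0, h⟩ = 0 := by
  have : (⟨0, h⟩ : ↥(comp0 n)) = ⟨0, h0⟩ := rfl
  rw [this]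
  exact congrArg Subtype.val hφ0

/-- globally, adding a unit vector adds a constant. -/
lemma psi_add_unit (h0 : (0 : Fin n → ℚ) ∈ comp0 n) (hφ0 : φ ⟨0, h0⟩ = ⟨0, h0⟩)
    {u : Fin n → ℚ} (hu : ∑ i, (u i) ^ 2 = 1) :
    ∀ x (hx : x ∈ comp0 n),
      psi φ ⟨x + u, add_unit_mem hx hu⟩ = psi φ ⟨x, hx⟩ + psi φ ⟨u, unit_mem hu⟩ := by
  have main : ∀ x (hx0 : x ∈ comp0 n), ∀ (hx : x ∈ comp0 n),
      psi φ ⟨x + u, add_unit_mem hx hu⟩ = psi φ ⟨x, hx⟩ + psi φ ⟨u, unit_mem hu⟩ := by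
    intro x hx0
    refine reach_ind (P := fun y => ∀ (hy : y ∈ comp0 n),
      psi φ ⟨y + u, add_unit_mem hy hu⟩ = psi φ ⟨y, hy⟩ + psi φ ⟨u, unit_mem hu⟩)
      ?_ hx0 ?_
    · intro a b hab ha hb
      have amem : a ∈ comp0 n := hb.trans hab.symm.reachable
      have hv : ∑ i, ((b - a) i) ^ 2 = 1 := by
        rw [show (1 : ℚ) = ∑ i, (a i - b i) ^ 2 from (adj_iff.mp hab).symm]
        exact Finset.sum_congr rfl fun i _ => by simp only [Pi.sub_apply]; ring
      have hba : b = a + (b - a) := by abel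
      have e1 : psi φ ⟨b + u, add_unit_mem hb hu⟩
          = psi φ ⟨a + (b - a) + u, add_unit_mem (add_unit_mem amem hv) hu⟩ :=
        psi_congr φ _ _ (by rw [← hba])
      have e2 : psi φ ⟨b, hb⟩ = psi φ ⟨a + (b - a), add_unit_mem amem hv⟩ :=
        psi_congr φ _ _ hba
      have e3 := delta_step φ amem hu hv
      have e4 := ha amem
      rw [e1, e2]
      have : psi φ ⟨a + u, add_unit_mem amem hu⟩ - psi φ ⟨a, amem⟩
          = psi φ ⟨u, unit_mem hu⟩ := by rw [e4]; abel
      rw [this] at e3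
      calc psi φ ⟨a + (b - a) + u, _⟩
          = psi φ ⟨a + (b - a), add_unit_mem amem hv⟩
            + (psi φ ⟨a + (b - a) + u, add_unit_mem (add_unit_mem amem hv) hu⟩
               - psi φ ⟨a + (b - a), add_unit_mem amem hv⟩) := by abel
        _ = psi φ ⟨a + (b - a), add_unit_mem amem hv⟩ + psi φ ⟨u, unit_mem hu⟩ := by
            rw [e3]
    · intro h00
      have e1 : psi φ ⟨(0 : Fin n → ℚ) + u, add_unit_mem h00 hu⟩ = psi φ ⟨u, unit_mem hu⟩ :=
        psi_congr φ _ _ (by simp)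
      rw [e1, psi_zero φ h0 hφ0 h00, zero_add]
  exact fun x hx => main x hx hx

/-- full additivity of ψ on the component. -/
lemma psi_add (h0 : (0 : Fin n → ℚ) ∈ comp0 n) (hφ0 : φ ⟨0, h0⟩ = ⟨0, h0⟩) :
    ∀ y (hy : y ∈ comp0 n) x (hx : x ∈ comp0 n),
      psi φ ⟨x + y, add_mem hx hy⟩ = psi φ ⟨x, hx⟩ + psi φ ⟨y, hy⟩ := by
  have main : ∀ y (hy0 : y ∈ comp0 n), ∀ (hy : y ∈ comp0 n), ∀ x (hx : x ∈ comp0 n),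
      psi φ ⟨x + y, add_mem hx hy⟩ = psi φ ⟨x, hx⟩ + psi φ ⟨y, hy⟩ := by
    intro y hy0
    refine reach_ind (P := fun z => ∀ (hz : z ∈ comp0 n), ∀ x (hx : x ∈ comp0 n),
      psi φ ⟨x + z, add_mem hx hz⟩ = psi φ ⟨x, hx⟩ + psi φ ⟨z, hz⟩) ?_ hy0 ?_
    · intro a b hab ha hb x hx
      have amem : a ∈ comp0 n := hb.trans hab.symm.reachable
      have hv : ∑ i, ((b - a) i) ^ 2 = 1 := by
        rw [show (1 : ℚ) = ∑ i, (a i - b i) ^ 2 from (adj_iff.mp hab).symm]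
        exact Finset.sum_congr rfl fun i _ => by simp only [Pi.sub_apply]; ring
      have e1 : psi φ ⟨x + b, add_mem hx hb⟩
          = psi φ ⟨(x + a) + (b - a), add_unit_mem (add_mem hx amem) hv⟩ :=
        psi_congr φ _ _ (by abel)
      have e2 := psi_add_unit φ h0 hφ0 hv (x + a) (add_mem hx amem)
      have e3 := ha amem x hx
      have e4 := psi_add_unit φ h0 hφ0 hv a amem
      have e5 : psi φ ⟨b, hb⟩ = psi φ ⟨a + (b - a), add_unit_mem amem hv⟩ :=
        psi_congr φ _ _ (by abel)
      rw [e1, e2, e3, e5, e4]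
      abel
    · intro h00 x hx
      have e1 : psi φ ⟨x + 0, add_mem hx h00⟩ = psi φ ⟨x, hx⟩ := psi_congr φ _ _ (by simp)
      rw [e1, psi_zero φ h0 hφ0 h00, add_zero]
  exact fun y hy => main y hy hy

lemma psi_neg (h0 : (0 : Fin n → ℚ) ∈ comp0 n) (hφ0 : φ ⟨0, h0⟩ = ⟨0, h0⟩)
    {x : Fin n → ℚ} (hx : x ∈ comp0 n) :
    psi φ ⟨-x, neg_mem hx⟩ = -psi φ ⟨x, hx⟩ := by
  have := psi_add φ h0 hφ0 (-x) (neg_mem hx) x hx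
  have e1 : psi φ ⟨x + -x, add_mem hx (neg_mem hx)⟩ = psi φ ⟨0, h0⟩ :=
    psi_congr φ _ _ (by simp)
  rw [e1, psi_zero φ h0 hφ0 h0] at this
  have := this.symm
  rw [add_comm] at this
  exact (neg_eq_of_add_eq_zero_left this).symm

lemma nsmul_mem {x : Fin n → ℚ} (hx : x ∈ comp0 n) (k : ℕ) :
    (k : ℚ) • x ∈ comp0 n := by
  induction k with
  | zero => simpa using zero_mem
  | succ m ih =>
    have : ((m + 1 : ℕ) : ℚ) • x = (m : ℚ) • x + x := by push_cast; rw [add_smul]; simp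
    rw [this]; exact add_mem ih hx

lemma zsmul_mem {x : Fin n → ℚ} (hx : x ∈ comp0 n) (k : ℤ) :
    (k : ℚ) • x ∈ comp0 n := by
  obtain ⟨m, rfl | rfl⟩ := Int.eq_nat_or_neg k
  · have h1 : (((m : ℤ) : ℚ)) = ((m : ℕ) : ℚ) := by push_cast; ring
    rw [h1]; exact nsmul_mem hx m
  · have h1 : (((-(m : ℤ)) : ℤ) : ℚ) = -((m : ℕ) : ℚ) := by push_cast; ring
    rw [h1, neg_smul]; exact neg_mem (nsmul_mem hx m)

lemma psi_nsmul (h0 : (0 : Fin n → ℚ) ∈ comp0 n) (hφ0 : φ ⟨0, h0⟩ = ⟨0, h0⟩)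
    {x : Fin n → ℚ} (hx : x ∈ comp0 n) (k : ℕ) :
    psi φ ⟨(k : ℚ) • x, nsmul_mem hx k⟩ = (k : ℚ) • psi φ ⟨x, hx⟩ := by
  induction k with
  | zero =>
    have e : psi φ ⟨((0 : ℕ) : ℚ) • x, nsmul_mem hx 0⟩ = psi φ ⟨0, h0⟩ :=
      psi_congr φ _ _ (by simp)
    rw [e, psi_zero φ h0 hφ0 h0]; simp
  | succ m ih =>
    have e : psi φ ⟨((m + 1 : ℕ) : ℚ) • x, nsmul_mem hx (m + 1)⟩
        = psi φ ⟨(m : ℚ) • x + x, add_mem (nsmul_mem hx m) hx⟩ :=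
      psi_congr φ _ _ (by push_cast; rw [add_smul]; simp)
    rw [e, psi_add φ h0 hφ0 x hx ((m : ℚ) • x) (nsmul_mem hx m), ih]
    push_cast
    rw [add_smul]
    simp

lemma psi_smul_val (h0 : (0 : Fin n → ℚ) ∈ comp0 n) (hφ0 : φ ⟨0, h0⟩ = ⟨0, h0⟩)
    {x y : Fin n → ℚ} (hx : x ∈ comp0 n) (k : ℤ) (hy : y ∈ comp0 n)
    (hxy : y = (k : ℚ) • x) : psi φ ⟨y, hy⟩ = (k : ℚ) • psi φ ⟨x, hx⟩ := by
  obtain ⟨m, rfl | rfl⟩ := Int.eq_nat_or_neg k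
  · have e : psi φ ⟨y, hy⟩ = psi φ ⟨((m : ℕ) : ℚ) • x, nsmul_mem hx m⟩ :=
      psi_congr φ _ _ (by rw [hxy]; norm_num)
    rw [e, psi_nsmul φ h0 hφ0 hx m]; norm_num
  · have e : psi φ ⟨y, hy⟩ = psi φ ⟨-(((m : ℕ) : ℚ) • x), neg_mem (nsmul_mem hx m)⟩ :=
      psi_congr φ _ _ (by rw [hxy]; push_cast; rw [neg_smul])
    rw [e, psi_neg φ h0 hφ0 (nsmul_mem hx m), psi_nsmul φ h0 hφ0 hx m]
    push_cast
    rw [neg_smul]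

end Phi

lemma sum_mem' {ι : Type*} (s : Finset ι) (f : ι → (Fin n → ℚ))
    (hf : ∀ i ∈ s, f i ∈ comp0 n) : ∑ i ∈ s, f i ∈ comp0 n := by
  classical
  induction s using Finset.induction_on with
  | empty => simpa using zero_mem
  | insert _ _ hnot ih =>
    rename_i a t
    rw [Finset.sum_insert hnot]
    exact add_mem (hf a (Finset.mem_insert_self a t))
      (ih fun i hi => hf i (Finset.mem_insert_of_mem hi))

lemma E_unit (i : Fin n) : ∑ k, ((Pi.single i 1 : Fin n → ℚ) k) ^ 2 = (1 : ℚ) := by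
  have h : ∀ k ∈ Finset.univ, ((Pi.single i 1 : Fin n → ℚ) k) ^ 2 = if k = i then (1 : ℚ) else 0 := by
    intro k _
    rcases eq_or_ne k i with rfl | hk
    · simp
    · simp [Pi.single_apply, hk]
  rw [Finset.sum_congr rfl h, Finset.sum_ite_eq' Finset.univ i fun _ => (1 : ℚ)]
  simp

section Phi2
variable (φ : (euclGraph n).induce (comp0 n) ≃g (euclGraph n).induce (comp0 n))

def gvec (i : Fin n) : Fin n → ℚ := psi φ ⟨(Pi.single i 1 : Fin n → ℚ), unit_mem (E_unit i)⟩

lemma psi_sum (h0 : (0 : Fin n → ℚ) ∈ comp0 n) (hφ0 : φ ⟨0, h0⟩ = ⟨0, h0⟩)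
    {ι : Type*} (s : Finset ι) (F : ι → ↥(comp0 n)) :
    psi φ ⟨∑ i ∈ s, (F i).1, sum_mem' s _ fun i _ => (F i).2⟩ = ∑ i ∈ s, psi φ (F i) := by
  classical
  induction s using Finset.induction_on with
  | empty =>
    have e : psi φ ⟨∑ i ∈ (∅ : Finset ι), (F i).1, sum_mem' ∅ _ fun i _ => (F i).2⟩
        = psi φ ⟨0, h0⟩ := psi_congr φ _ _ (by simp)
    rw [e, psi_zero φ h0 hφ0 h0, Finset.sum_empty]
  | insert _ _ hnot ih =>
    rename_i a t
    have e : psi φ ⟨∑ i ∈ insert a t, (F i).1, sum_mem' _ _ fun i _ => (F i).2⟩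
        = psi φ ⟨(F a).1 + ∑ i ∈ t, (F i).1,
            add_mem (F a).2 (sum_mem' t _ fun i _ => (F i).2)⟩ :=
      psi_congr φ _ _ (by rw [Finset.sum_insert hnot])
    have e2 : psi φ ⟨(F a).1, (F a).2⟩ = psi φ (F a) := rfl
    rw [e, psi_add φ h0 hφ0 _ (sum_mem' t _ fun i _ => (F i).2) _ (F a).2,
      ih, Finset.sum_insert hnot, e2]

/-- ψ is given by the matrix with rows `gvec` on all of `comp0`. -/
lemma psi_rep (h0 : (0 : Fin n → ℚ) ∈ comp0 n) (hφ0 : φ ⟨0, h0⟩ = ⟨0, h0⟩)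
    {w : Fin n → ℚ} (hw : w ∈ comp0 n) :
    psi φ ⟨w, hw⟩ = ∑ i, w i • gvec φ i := by
  classical
  set q : ℕ := ∏ i, (w i).den with hq
  have hqpos : 0 < q := Finset.prod_pos fun i _ => (w i).pos
  set z : Fin n → ℤ := fun i => (w i).num * ((q / (w i).den : ℕ) : ℤ) with hz
  have hzc : ∀ i, ((z i : ℚ)) = (q : ℚ) * w i := by
    intro i
    have hd : (w i).den ∣ q := Finset.dvd_prod_of_mem _ (Finset.mem_univ i)
    obtain ⟨c, hc⟩ := hd
    have hcq : q / (w i).den = c := by rw [hc]; exact Nat.mul_div_cancel_left c (w i).pos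
    have hden : ((w i).den : ℚ) ≠ 0 := by positivity
    have hnum : ((w i).num : ℚ) = w i * ((w i).den : ℚ) :=
      (div_eq_iff hden).mp (Rat.num_div_den (w i))
    rw [hz]
    simp only
    rw [hcq, hc]
    push_cast
    rw [hnum]
    ring
  -- the subtype-valued family of scaled basis vectors
  set F : Fin n → ↥(comp0 n) := fun i =>
    ⟨((z i : ℚ)) • (Pi.single i 1 : Fin n → ℚ), zsmul_mem (unit_mem (E_unit i)) (z i)⟩ with hF
  have hzdecomp : (fun i => ((z i : ℚ))) = ∑ i, (F i).1 := by
    funext k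
    rw [Finset.sum_apply]
    have h : ∀ i ∈ Finset.univ, ((F i).1) k = if i = k then ((z i : ℚ)) else 0 := by
      intro i _
      rcases eq_or_ne i k with rfl | hik
      · simp [hF]
      · simp [hF, Pi.single_apply, hik]
    rw [Finset.sum_congr rfl h, Finset.sum_ite_eq' Finset.univ k fun i => ((z i : ℚ))]
    simp
  have hzmem : (fun i => ((z i : ℚ))) ∈ comp0 n := by
    rw [hzdecomp]; exact sum_mem' _ _ fun i _ => (F i).2
  have hpsiz : psi φ ⟨(fun i => ((z i : ℚ))), hzmem⟩ = ∑ i, ((z i : ℚ)) • gvec φ i := by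
    have e : psi φ ⟨(fun i => ((z i : ℚ))), hzmem⟩
        = psi φ ⟨∑ i, (F i).1, sum_mem' _ _ fun i _ => (F i).2⟩ :=
      psi_congr φ _ _ hzdecomp
    rw [e, psi_sum φ h0 hφ0 _ F]
    refine Finset.sum_congr rfl fun i _ => ?_
    exact psi_smul_val φ h0 hφ0 (unit_mem (E_unit i)) (z i) _ rfl
  have hqw : (fun i => ((z i : ℚ))) = ((q : ℕ) : ℚ) • w := by
    funext i; rw [hzc i]; simp
  have hqwmem : ((q : ℕ) : ℚ) • w ∈ comp0 n := nsmul_mem hw q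
  have e2 : psi φ ⟨(fun i => ((z i : ℚ))), hzmem⟩ = psi φ ⟨((q : ℕ) : ℚ) • w, hqwmem⟩ :=
    psi_congr φ _ _ hqw
  have e3 := psi_nsmul φ h0 hφ0 hw q
  have key2 : ((q : ℕ) : ℚ) • psi φ ⟨w, hw⟩ = ((q : ℕ) : ℚ) • ∑ i, w i • gvec φ i := by
    rw [← e3]
    have : psi φ ⟨((q : ℕ) : ℚ) • w, nsmul_mem hw q⟩ = psi φ ⟨((q : ℕ) : ℚ) • w, hqwmem⟩ := rfl
    rw [this, ← e2, hpsiz, Finset.smul_sum]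
    refine Finset.sum_congr rfl fun i _ => ?_
    rw [hzc i, mul_smul]
  have hqne : ((q : ℕ) : ℚ) ≠ 0 := by positivity
  exact smul_right_injective _ hqne key2

lemma gvec_diag (h0 : (0 : Fin n → ℚ) ∈ comp0 n) (hφ0 : φ ⟨0, h0⟩ = ⟨0, h0⟩)
    (i : Fin n) : ∑ j, (gvec φ i j) ^ 2 = 1 := by
  have hadj : ∑ k, (((Pi.single i 1 : Fin n → ℚ)) k - (0 : Fin n → ℚ) k) ^ 2 = 1 := by
    have he : ∑ k, (((Pi.single i 1 : Fin n → ℚ)) k - (0 : Fin n → ℚ) k) ^ 2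
        = ∑ k, ((Pi.single i 1 : Fin n → ℚ) k) ^ 2 :=
      Finset.sum_congr rfl fun k _ => by simp
    rw [he, E_unit i]
  have := psi_adj φ (a := ⟨(Pi.single i 1 : Fin n → ℚ), unit_mem (E_unit i)⟩)
    (b := ⟨0, h0⟩) hadj
  rw [show psi φ ⟨(0 : Fin n → ℚ), h0⟩ = 0 from psi_zero φ h0 hφ0 h0] at this
  rw [← this]
  exact Finset.sum_congr rfl fun j _ => by simp [gvec]

lemma gvec_cross (h0 : (0 : Fin n → ℚ) ∈ comp0 n) (hφ0 : φ ⟨0, h0⟩ = ⟨0, h0⟩)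
    {i i' : Fin n} (hii : i ≠ i') : ∑ j, gvec φ i j * gvec φ i' j = 0 := by
  classical
  set s : Fin n → ℚ := (3/5 : ℚ) • (Pi.single i 1 : Fin n → ℚ)
      + (4/5 : ℚ) • (Pi.single i' 1 : Fin n → ℚ) with hs
  have hcrossk : ∀ k, (Pi.single i 1 : Fin n → ℚ) k * (Pi.single i' 1 : Fin n → ℚ) k = 0 := by
    intro k
    rcases eq_or_ne k i with rfl | hk
    · simp [Pi.single_apply, hii.symm]
    · simp [Pi.single_apply, hk]
  have hsunit : ∑ k, (s k) ^ 2 = 1 := by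
    have hpt : ∀ k ∈ Finset.univ, (s k) ^ 2
        = (9/25 : ℚ) * ((Pi.single i 1 : Fin n → ℚ) k) ^ 2
          + (16/25 : ℚ) * ((Pi.single i' 1 : Fin n → ℚ) k) ^ 2
          + (24/25 : ℚ) * ((Pi.single i 1 : Fin n → ℚ) k * (Pi.single i' 1 : Fin n → ℚ) k) := by
      intro k _
      simp only [hs, Pi.add_apply, Pi.smul_apply, smul_eq_mul]
      ring
    rw [Finset.sum_congr rfl hpt, Finset.sum_add_distrib, Finset.sum_add_distrib,
      ← Finset.mul_sum, ← Finset.mul_sum, ← Finset.mul_sum, E_unit i, E_unit i']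
    have : ∑ k, (Pi.single i 1 : Fin n → ℚ) k * (Pi.single i' 1 : Fin n → ℚ) k = 0 :=
      Finset.sum_eq_zero fun k _ => hcrossk k
    rw [this]
    norm_num
  have hsmem : s ∈ comp0 n := unit_mem hsunit
  have hcoord : ∀ j, psi φ ⟨s, hsmem⟩ j = 3/5 * gvec φ i j + 4/5 * gvec φ i' j := by
    intro j
    rw [psi_rep φ h0 hφ0 hsmem]
    rw [Finset.sum_apply]
    have hpt : ∀ k ∈ Finset.univ, (s k • gvec φ k) j
        = (if k = i then (3/5 : ℚ) * gvec φ i j else 0)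
          + (if k = i' then (4/5 : ℚ) * gvec φ i' j else 0) := by
      intro k _
      rcases eq_or_ne k i with rfl | hki
      · simp [hs, Pi.single_apply, hii, hii.symm]
      · rcases eq_or_ne k i' with rfl | hki'
        · simp [hs, Pi.single_apply, hki, hii.symm, Ne.symm hki]
        · simp [hs, Pi.single_apply, hki, hki']
    rw [Finset.sum_congr rfl hpt, Finset.sum_add_distrib,
      Finset.sum_ite_eq' Finset.univ i fun _ => (3/5 : ℚ) * gvec φ i j,
      Finset.sum_ite_eq' Finset.univ i' fun _ => (4/5 : ℚ) * gvec φ i' j]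
    simp
  have hadj : ∑ k, (s k - (0 : Fin n → ℚ) k) ^ 2 = 1 := by
    rw [← hsunit]; exact Finset.sum_congr rfl fun k _ => by simp
  have htrans := psi_adj φ (a := ⟨s, hsmem⟩) (b := ⟨0, h0⟩) hadj
  rw [show psi φ ⟨(0 : Fin n → ℚ), h0⟩ = 0 from psi_zero φ h0 hφ0 h0] at htrans
  have hexp : ∑ j, (psi φ ⟨s, hsmem⟩ j - (0 : Fin n → ℚ) j) ^ 2
      = (9/25 : ℚ) * ∑ j, (gvec φ i j) ^ 2 + (16/25 : ℚ) * ∑ j, (gvec φ i' j) ^ 2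
        + (24/25 : ℚ) * ∑ j, gvec φ i j * gvec φ i' j := by
    rw [Finset.mul_sum, Finset.mul_sum, Finset.mul_sum, ← Finset.sum_add_distrib,
      ← Finset.sum_add_distrib]
    refine Finset.sum_congr rfl fun j _ => ?_
    rw [hcoord j]
    simp only [Pi.zero_apply]
    ring
  rw [hexp, gvec_diag φ h0 hφ0 i, gvec_diag φ h0 hφ0 i'] at htrans
  linarith

lemma gvec_ortho (h0 : (0 : Fin n → ℚ) ∈ comp0 n) (hφ0 : φ ⟨0, h0⟩ = ⟨0, h0⟩)
    (i i' : Fin n) : ∑ j, gvec φ i j * gvec φ i' j = if i = i' then 1 else 0 := by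
  rcases eq_or_ne i i' with rfl | hii
  · simp only [if_pos rfl]
    rw [← gvec_diag φ h0 hφ0 i]
    exact Finset.sum_congr rfl fun j _ => by ring
  · rw [if_neg hii]
    exact gvec_cross φ h0 hφ0 hii

/-- norm preservation on the component. -/
lemma psi_norm (h0 : (0 : Fin n → ℚ) ∈ comp0 n) (hφ0 : φ ⟨0, h0⟩ = ⟨0, h0⟩)
    {w : Fin n → ℚ} (hw : w ∈ comp0 n) :
    ∑ j, (psi φ ⟨w, hw⟩ j) ^ 2 = ∑ i, (w i) ^ 2 := by
  classical
  rw [psi_rep φ h0 hφ0 hw]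
  have step1 : ∀ j ∈ Finset.univ, ((∑ i, w i • gvec φ i) j) ^ 2
      = ∑ i, ∑ i', (w i * gvec φ i j) * (w i' * gvec φ i' j) := by
    intro j _
    rw [Finset.sum_apply]
    simp only [Pi.smul_apply, smul_eq_mul]
    rw [pow_two, Finset.sum_mul_sum]
  rw [Finset.sum_congr rfl step1, Finset.sum_comm]
  have step2 : ∀ i ∈ Finset.univ, ∑ j, ∑ i', (w i * gvec φ i j) * (w i' * gvec φ i' j)
      = w i * w i := by
    intro i _
    rw [Finset.sum_comm]
    have inner : ∀ i' ∈ Finset.univ, ∑ j, (w i * gvec φ i j) * (w i' * gvec φ i' j)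
        = if i' = i then w i * w i else 0 := by
      intro i' _
      have : ∀ j ∈ Finset.univ, (w i * gvec φ i j) * (w i' * gvec φ i' j)
          = (w i * w i') * (gvec φ i j * gvec φ i' j) := fun j _ => by ring
      rw [Finset.sum_congr rfl this, ← Finset.mul_sum, gvec_ortho φ h0 hφ0 i i']
      rcases eq_or_ne i i' with rfl | hii
      · simp
      · rw [if_neg hii, if_neg (Ne.symm hii), mul_zero]
    rw [Finset.sum_congr rfl inner, Finset.sum_ite_eq' Finset.univ i fun _ => w i * w i]
    simp
  rw [Finset.sum_congr rfl step2]
  exact Finset.sum_congr rfl fun i _ => by ring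

end Phi2
end BQ

/-- Rational Beckman–Quarles theorem: any automorphism of the connected component of
`0` in the unit-distance graph on `ℚⁿ` (`n ≥ 2`) fixing `0` preserves all distances. -/
theorem stmt_16 {n : ℕ} (hn : 2 ≤ n)
    (φ : (euclGraph n).induce (comp0 n) ≃g (euclGraph n).induce (comp0 n))
    (h0 : (0 : Fin n → ℚ) ∈ comp0 n) (hφ0 : φ ⟨0, h0⟩ = ⟨0, h0⟩) :
    ∀ a b : comp0 n,
      ∑ i, ((φ a).1 i - (φ b).1 i) ^ 2 = ∑ i, (a.1 i - b.1 i) ^ 2 := by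
  intro a b
  have hw : a.1 - b.1 ∈ comp0 n := BQ.sub_mem a.2 b.2
  have hadd := BQ.psi_add φ h0 hφ0 (a.1 - b.1) hw b.1 b.2
  have e : BQ.psi φ ⟨b.1 + (a.1 - b.1), BQ.add_mem b.2 hw⟩ = BQ.psi φ a := by
    have h1 : b.1 + (a.1 - b.1) = a.1 := by abel
    have := BQ.psi_congr φ (BQ.add_mem b.2 hw) a.2 h1
    exact this
  rw [e] at hadd
  have hnorm := BQ.psi_norm φ h0 hφ0 hw
  have lhs : ∑ i, ((φ a).1 i - (φ b).1 i) ^ 2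
      = ∑ i, (BQ.psi φ ⟨a.1 - b.1, hw⟩ i) ^ 2 := by
    refine Finset.sum_congr rfl fun i _ => ?_
    have hi := congrFun hadd i
    simp only [Pi.add_apply] at hi
    have : (φ a).1 i - (φ b).1 i = BQ.psi φ ⟨a.1 - b.1, hw⟩ i := by
      have h2 : BQ.psi φ a i = (φ a).1 i := rfl
      have h3 : BQ.psi φ b i = (φ b).1 i := rfl
      rw [← h2, ← h3]
      linarith
    rw [this]
  rw [lhs, hnorm]
  exact Finset.sum_congr rfl fun i _ => by simp
end

section
/- The determinant of the quadratic form Sₖ(x) = Σ_{1≤i≤j≤k} xᵢxⱼ equals (k+1)/2ᵏ, which is congruent modulo rational squares to k+1 if k is even and to (k+1)/2 if k is odd. -/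
/-- The determinant of the Gram matrix of `Sₖ` (with `1` on the diagonal and `1/2`
off the diagonal) equals `(k+1)/2ᵏ`, which is congruent modulo rational squares to
`k + 1` for even `k` and to `(k+1)/2` for odd `k`. -/
theorem stmt_17 (k : ℕ) :
    (Matrix.of fun i j : Fin k => if i = j then (1 : ℚ) else 1 / 2).det
        = ((k : ℚ) + 1) / 2 ^ k ∧
      ∃ c : ℚ, c ≠ 0 ∧
        (Matrix.of fun i j : Fin k => if i = j then (1 : ℚ) else 1 / 2).det
          = c ^ 2 * (if Even k then (k : ℚ) + 1 else ((k : ℚ) + 1) / 2) := by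
  have hM : (Matrix.of fun i j : Fin k => if i = j then (1 : ℚ) else 1 / 2)
      = (1/2 : ℚ) • (1 + Matrix.replicateCol Unit (fun _ => (1:ℚ)) * Matrix.replicateRow Unit (fun _ => (1:ℚ))) := by
    ext i j
    by_cases h : i = j <;>
      simp [h, Matrix.one_apply, Matrix.mul_apply, Matrix.replicateCol, Matrix.replicateRow] <;> norm_num
  have hdet : (Matrix.of fun i j : Fin k => if i = j then (1 : ℚ) else 1 / 2).det
      = ((k : ℚ) + 1) / 2 ^ k := by
    rw [hM, Matrix.det_smul, Matrix.det_one_add_replicateCol_mul_replicateRow]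
    simp [dotProduct, Finset.card_univ, div_eq_mul_inv, mul_comm, add_comm]
  refine ⟨hdet, ?_⟩
  rcases Nat.even_or_odd k with he | ho
  · refine ⟨(1/2)^(k/2), by positivity, ?_⟩
    rw [hdet, if_pos he]
    rw [← pow_mul]
    obtain ⟨m, hm⟩ := he
    have : k / 2 * 2 = k := by omega
    rw [this]
    field_simp
    rw [← mul_pow]; norm_num
  · refine ⟨(1/2)^(k/2), by positivity, ?_⟩
    rw [hdet, if_neg (Nat.not_even_iff_odd.mpr ho)]
    rw [← pow_mul]
    obtain ⟨m, hm⟩ := ho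
    subst hm
    have h1 : (2*m+1)/2*2 = 2*m := by omega
    rw [h1, show (2:ℚ)^(2*m+1) = 2^(2*m) * 2 from pow_succ 2 (2*m)]
    field_simp
    rw [← mul_pow]; norm_num
end
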